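/- Let R be a (not necessarily commutative) ring, let m ≥ 1, and let O₁, O₂, …, O_m ∈ R. For a nonempty subset I = {i₁ < i₂ < … < i_k} of {2, …, m}, let C_I denote the iterated commutator [[⋯[[O₁, O_{i₁}], O_{i₂}]⋯], O_{i_k}] (where [a,b] = ab − ba), and let P_I denote the product of the elements O_l for l ∈ {2,…,m} \ I, taken in increasing order of l (the empty product being 1). Then O₁O₂⋯O_m = (O₂O₃⋯O_m)·O₁ + Σ_{∅ ≠ I ⊆ {2,…,m}} P_I · C_I. -/

import Mathlib

lemma sort_insert_max {a : ℕ} {s : Finset ℕ} (h : ∀ b ∈ s, b < a) :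
    (insert a s).sort (· ≤ ·) = s.sort (· ≤ ·) ++ [a] := by
  have ha : a ∉ s := fun hb => lt_irrefl a (h a hb)
  refine (fun hp hs => List.Perm.eq_of_pairwise' (Finset.pairwise_sort _ _) hs hp :
    List.Perm ((insert a s).sort (· ≤ ·)) (s.sort (· ≤ ·) ++ [a]) → List.Pairwise (· ≤ ·) (s.sort (· ≤ ·) ++ [a]) → _) ?_ ?_
  · have p1 := Finset.sort_perm_toList (insert a s) (· ≤ ·)
    have p2 := Finset.toList_insert ha
    have p3 := (Finset.sort_perm_toList s (· ≤ ·)).symm.cons a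
    exact ((p1.trans p2).trans p3).trans (List.perm_append_singleton a _).symm
  · rw [List.pairwise_append]
    refine ⟨Finset.pairwise_sort _ _, List.pairwise_singleton _ a, ?_⟩
    intro x hx y hy
    simp only [List.mem_singleton] at hy
    subst hy
    exact (h x (Finset.mem_sort (α := ℕ) (· ≤ ·) |>.mp hx)).le

lemma Icc_two_succ (m : ℕ) (hm : 1 ≤ m) :
    Finset.Icc 2 (m + 1) = insert (m + 1) (Finset.Icc 2 m) := by
  ext x; simp only [Finset.mem_Icc, Finset.mem_insert]; omega

lemma sort_Icc_two (m : ℕ) :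
    (Finset.Icc 2 m).sort (· ≤ ·) = (List.range (m - 1)).map (· + 2) := by
  induction m with
  | zero => simp [show Finset.Icc 2 0 = ∅ from Finset.Icc_eq_empty (by omega)]
  | succ m ih =>
    rcases Nat.eq_zero_or_pos m with rfl | hm
    · simp [show Finset.Icc 2 1 = ∅ from Finset.Icc_eq_empty (by omega)]
    · rw [Icc_two_succ m hm, sort_insert_max (by intro b hb; simp at hb; omega), ih,
        show m + 1 - 1 = (m - 1) + 1 by omega, List.range_succ, List.map_append]
      simp
      omega

theorem key {R : Type*} [Ring R] (O : ℕ → R) (m : ℕ) :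
    O 1 * (((Finset.Icc 2 m).sort (· ≤ ·)).map O).prod =
      ∑ I ∈ (Finset.Icc 2 m).powerset,
        ((((Finset.Icc 2 m) \ I).sort (· ≤ ·)).map O).prod *
          (I.sort (· ≤ ·)).foldl (fun acc i => acc * O i - O i * acc) (O 1) := by
  induction m with
  | zero => simp [show Finset.Icc 2 0 = ∅ from Finset.Icc_eq_empty (by omega)]
  | succ m ih =>
    rcases Nat.eq_zero_or_pos m with rfl | hm
    · simp [show Finset.Icc 2 1 = ∅ from Finset.Icc_eq_empty (by omega)]
    · have hmem : m + 1 ∉ Finset.Icc 2 m := by simp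
      rw [Icc_two_succ m hm, Finset.sum_powerset_insert hmem]
      have hlt : ∀ I : Finset ℕ, I ⊆ Finset.Icc 2 m → ∀ b ∈ Finset.Icc 2 m \ I, b < m + 1 := by
        intro I hI b hb
        rw [Finset.mem_sdiff, Finset.mem_Icc] at hb
        omega
      have h1 : ∀ I ∈ (Finset.Icc 2 m).powerset,
          (((insert (m + 1) (Finset.Icc 2 m) \ I).sort (· ≤ ·)).map O).prod *
            (I.sort (· ≤ ·)).foldl (fun acc i => acc * O i - O i * acc) (O 1) =
          (((Finset.Icc 2 m \ I).sort (· ≤ ·)).map O).prod * O (m + 1) *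
            (I.sort (· ≤ ·)).foldl (fun acc i => acc * O i - O i * acc) (O 1) := by
        intro I hI
        rw [Finset.mem_powerset] at hI
        have hnI : m + 1 ∉ I := fun h => hmem (hI h)
        rw [Finset.insert_sdiff_of_notMem _ hnI, sort_insert_max (hlt I hI),
          List.map_append, List.prod_append]
        simp [mul_assoc]
      have h2 : ∀ I ∈ (Finset.Icc 2 m).powerset,
          (((insert (m + 1) (Finset.Icc 2 m) \ insert (m + 1) I).sort (· ≤ ·)).map O).prod *
            ((insert (m + 1) I).sort (· ≤ ·)).foldl (fun acc i => acc * O i - O i * acc) (O 1) =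
          (((Finset.Icc 2 m \ I).sort (· ≤ ·)).map O).prod *
            ((I.sort (· ≤ ·)).foldl (fun acc i => acc * O i - O i * acc) (O 1) * O (m + 1) -
             O (m + 1) * (I.sort (· ≤ ·)).foldl (fun acc i => acc * O i - O i * acc) (O 1)) := by
        intro I hI
        rw [Finset.mem_powerset] at hI
        have hnI : m + 1 ∉ I := fun h => hmem (hI h)
        have hsd : insert (m + 1) (Finset.Icc 2 m) \ insert (m + 1) I = Finset.Icc 2 m \ I := by
          ext x
          simp only [Finset.mem_sdiff, Finset.mem_insert, Finset.mem_Icc, not_or]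
          constructor
          · rintro ⟨h1 | h1, h2, h3⟩
            · exact absurd h1 h2
            · exact ⟨h1, h3⟩
          · rintro ⟨h1, h2⟩
            exact ⟨Or.inr h1, by omega, h2⟩
        have hIlt : ∀ b ∈ I, b < m + 1 := by
          intro b hb
          have := hI hb
          rw [Finset.mem_Icc] at this
          omega
        rw [hsd, sort_insert_max hIlt, List.foldl_append, List.foldl_cons, List.foldl_nil]
      rw [Finset.sum_congr rfl h1, Finset.sum_congr rfl h2, ← Finset.sum_add_distrib]
      have : ∀ I ∈ (Finset.Icc 2 m).powerset,
          (((Finset.Icc 2 m \ I).sort (· ≤ ·)).map O).prod * O (m + 1) *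
            (I.sort (· ≤ ·)).foldl (fun acc i => acc * O i - O i * acc) (O 1) +
          (((Finset.Icc 2 m \ I).sort (· ≤ ·)).map O).prod *
            ((I.sort (· ≤ ·)).foldl (fun acc i => acc * O i - O i * acc) (O 1) * O (m + 1) -
             O (m + 1) * (I.sort (· ≤ ·)).foldl (fun acc i => acc * O i - O i * acc) (O 1)) =
          (((Finset.Icc 2 m \ I).sort (· ≤ ·)).map O).prod *
            (I.sort (· ≤ ·)).foldl (fun acc i => acc * O i - O i * acc) (O 1) * O (m + 1) := by
        intro I _
        noncomm_ring
      rw [Finset.sum_congr rfl this, ← Finset.sum_mul, ← ih,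
        sort_insert_max (by intro b hb; rw [Finset.mem_Icc] at hb; omega),
        List.map_append, List.prod_append]
      simp [mul_assoc]

/-- For elements `O 1, …, O m` of a ring, writing `[a,b] = a*b - b*a`,
`C_I` for the iterated commutator `[[⋯[[O 1, O i₁], O i₂]⋯], O i_k]` over the increasing
enumeration of a nonempty subset `I ⊆ {2,…,m}`, and `P_I` for the increasing-order product
of the `O l` with `l ∈ {2,…,m} \ I`, we have
`O 1 * O 2 * ⋯ * O m = (O 2 * ⋯ * O m) * O 1 + ∑_{∅ ≠ I ⊆ {2,…,m}} P_I * C_I`. -/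
theorem statement0 {R : Type*} [Ring R] (m : ℕ) (hm : 1 ≤ m) (O : ℕ → R) :
    ((List.range m).map (fun i => O (i + 1))).prod =
      ((List.range (m - 1)).map (fun i => O (i + 2))).prod * O 1 +
      ∑ I ∈ (Finset.Icc 2 m).powerset.filter (· ≠ ∅),
        ((((Finset.Icc 2 m) \ I).sort (· ≤ ·)).map O).prod *
          (I.sort (· ≤ ·)).foldl (fun acc i => acc * O i - O i * acc) (O 1) := by
  have hk := key O m
  -- LHS equals O 1 * product over Icc 2 m
  have hL : ((List.range m).map (fun i => O (i + 1))).prod =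
      O 1 * (((Finset.Icc 2 m).sort (· ≤ ·)).map O).prod := by
    obtain ⟨n, rfl⟩ := Nat.exists_eq_succ_of_ne_zero (show m ≠ 0 by omega)
    rw [sort_Icc_two, List.range_succ_eq_map, List.map_cons, List.prod_cons, List.map_map,
      List.map_map]
    congr 1
  -- split the sum over the powerset into the empty set and the rest
  have hsplit : ∑ I ∈ (Finset.Icc 2 m).powerset,
        ((((Finset.Icc 2 m) \ I).sort (· ≤ ·)).map O).prod *
          (I.sort (· ≤ ·)).foldl (fun acc i => acc * O i - O i * acc) (O 1) =
      ((((Finset.Icc 2 m)).sort (· ≤ ·)).map O).prod * O 1 +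
      ∑ I ∈ (Finset.Icc 2 m).powerset.filter (· ≠ ∅),
        ((((Finset.Icc 2 m) \ I).sort (· ≤ ·)).map O).prod *
          (I.sort (· ≤ ·)).foldl (fun acc i => acc * O i - O i * acc) (O 1) := by
    rw [← Finset.sum_filter_add_sum_filter_not ((Finset.Icc 2 m).powerset) (· = ∅)]
    congr 1
    have : (Finset.Icc 2 m).powerset.filter (· = ∅) = {∅} := by
      ext I
      simp only [Finset.mem_filter, Finset.mem_powerset, Finset.mem_singleton]
      constructor
      · rintro ⟨-, h⟩; exact h
      · rintro rfl; exact ⟨Finset.empty_subset _, rfl⟩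
    rw [this, Finset.sum_singleton]
    simp
  have hP : ((((Finset.Icc 2 m)).sort (· ≤ ·)).map O).prod =
      ((List.range (m - 1)).map (fun i => O (i + 2))).prod := by
    rw [sort_Icc_two, List.map_map]
    rfl
  rw [hL, hk, hsplit, hP]
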